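/- In the ε-model with ε = 0 and d = 0, with μ uniform on S², the conditional probability P(u, w, μ) that experiment e⁰_{u,0} gives outcome o₁ᵘ after conditioning on outcome o₁ʷ of e⁰_{w,0} equals 1 - α/π, where α is the angle between u and w. -/

import Mathlib

open MeasureTheory Metric ProbabilityTheory
open scoped RealInnerProductSpace

open Set Module
open scoped Real Pointwise ENNReal

local notation "E3" => EuclideanSpace ℝ (Fin 3)

theorem basis_exists (u w : E3) (hu : ‖u‖ = 1) (hw : ‖w‖ = 1) :
    ∃ b : OrthonormalBasis (Fin 3) ℝ E3, b 0 = u ∧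
      w = Real.cos (InnerProductGeometry.angle u w) • b 0
        + Real.sin (InnerProductGeometry.angle u w) • b 1 := by
  set α := InnerProductGeometry.angle u w with hα
  have huu : ⟪u, u⟫ = 1 := by
    rw [real_inner_self_eq_norm_mul_norm, hu]; norm_num
  have hcos : Real.cos α = ⟪u, w⟫ := by
    rw [hα, InnerProductGeometry.cos_angle, hu, hw]; simp
  have hpy := Real.sin_sq_add_cos_sq α
  have hcard : finrank ℝ E3 = Fintype.card (Fin 3) := by simp
  have hsq : ‖w - Real.cos α • u‖ ^ 2 = Real.sin α ^ 2 := by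
    have hwu : ⟪w, u⟫ = Real.cos α := by rw [real_inner_comm]; exact hcos.symm
    rw [norm_sub_sq_real, hw, real_inner_smul_right, hwu, norm_smul, hu]
    simp only [Real.norm_eq_abs]
    rw [mul_pow, sq_abs]
    nlinarith [hpy]
  by_cases hs : Real.sin α = 0
  · -- degenerate : w = cos α • u
    have hw' : w = Real.cos α • u := by
      have h0 : ‖w - Real.cos α • u‖ ^ 2 = 0 := by rw [hsq, hs]; ring
      have h0' : w - Real.cos α • u = 0 := by
        have := pow_eq_zero_iff (n := 2) (by norm_num) |>.mp h0
        rwa [norm_eq_zero] at this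
      rw [← sub_eq_zero]; exact h0'
    have hon : Orthonormal ℝ (({0} : Set (Fin 3)).restrict ![u, 0, 0]) := by
      constructor
      · rintro ⟨i, hi⟩
        simp only [Set.mem_singleton_iff] at hi
        subst hi; simpa [Set.restrict] using hu
      · rintro ⟨i, hi⟩ ⟨j, hj⟩ hij
        simp only [Set.mem_singleton_iff] at hi hj
        exact absurd (Subtype.ext (hi.trans hj.symm)) hij
    obtain ⟨b, hb⟩ := hon.exists_orthonormalBasis_extension_of_card_eq hcard
    have hb0 : b 0 = u := by simpa using hb 0 rfl
    exact ⟨b, hb0, by rw [hs, hw', hb0]; simp⟩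
  · have hsinpos : 0 < Real.sin α :=
      lt_of_le_of_ne (Real.sin_nonneg_of_nonneg_of_le_pi
        (InnerProductGeometry.angle_nonneg u w) (InnerProductGeometry.angle_le_pi u w))
        (Ne.symm hs)
    set e := (Real.sin α)⁻¹ • (w - Real.cos α • u) with he
    have hue : ⟪u, e⟫ = 0 := by
      rw [he, real_inner_smul_right, inner_sub_right, real_inner_smul_right, huu, ← hcos]
      ring
    have hwsub : ‖w - Real.cos α • u‖ = Real.sin α := by
      nlinarith [norm_nonneg (w - Real.cos α • u), hsinpos, hsq]
    have hne : ‖e‖ = 1 := by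
      rw [he, norm_smul, hwsub, Real.norm_eq_abs, abs_inv, abs_of_pos hsinpos,
        inv_mul_cancel₀ hs]
    have hon : Orthonormal ℝ (({0, 1} : Set (Fin 3)).restrict ![u, e, 0]) := by
      constructor
      · rintro ⟨i, hi⟩
        simp only [Set.mem_insert_iff, Set.mem_singleton_iff] at hi
        rcases hi with rfl | rfl
        · simpa [Set.restrict] using hu
        · simpa [Set.restrict] using hne
      · rintro ⟨i, hi⟩ ⟨j, hj⟩ hij
        simp only [Set.mem_insert_iff, Set.mem_singleton_iff] at hi hj
        have hij' : i ≠ j := fun h => hij (Subtype.ext h)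
        rcases hi with rfl | rfl <;> rcases hj with rfl | rfl <;>
          first
            | exact absurd rfl hij'
            | simpa [Set.restrict] using hue
            | simpa [Set.restrict, mul_comm, real_inner_comm] using hue
    obtain ⟨b, hb⟩ := hon.exists_orthonormalBasis_extension_of_card_eq hcard
    have h0 : b 0 = u := by simpa using hb 0 (by simp)
    have h1 : b 1 = e := by simpa using hb 1 (by simp)
    refine ⟨b, h0, ?_⟩
    rw [h0, h1, he, smul_smul, mul_inv_cancel₀ hs, one_smul]
    abel

noncomputable def wedge2 (α : ℝ) : Set (ℝ × ℝ) :=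
  {p : ℝ × ℝ | p.1 ^ 2 + p.2 ^ 2 < 1 ∧ 0 < p.1 ∧ 0 < Real.cos α * p.1 + Real.sin α * p.2}

theorem wedge2_isOpen (α : ℝ) : IsOpen (wedge2 α) := by
  have : wedge2 α = {p : ℝ × ℝ | p.1 ^ 2 + p.2 ^ 2 < 1} ∩
      ({p : ℝ × ℝ | 0 < p.1} ∩ {p : ℝ × ℝ | 0 < Real.cos α * p.1 + Real.sin α * p.2}) := by
    ext p; simp [wedge2, and_assoc]
  rw [this]
  refine IsOpen.inter (isOpen_lt (by fun_prop) continuous_const)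
    (IsOpen.inter (isOpen_lt continuous_const continuous_fst)
      (isOpen_lt continuous_const (by fun_prop)))

theorem wedge2_volume {α : ℝ} (h0 : 0 ≤ α) (hπ : α ≤ π) :
    volume (wedge2 α) = ENNReal.ofReal ((π - α) / 2) := by
  -- angle characterization
  have key : ∀ θ ∈ Set.Ioo (-π) π, ((0 < Real.cos θ ∧ 0 < Real.cos (θ - α))
      ↔ θ ∈ Set.Ioo (α - π/2) (π/2)) := by
    intro θ hθ
    constructor
    · rintro ⟨h1, h2⟩
      have hθ2 : θ ∈ Set.Ioo (-(π/2)) (π/2) := by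
        by_contra hc
        simp only [Set.mem_Ioo, not_and_or, not_lt] at hc
        rcases hc with hc | hc
        · have : Real.cos θ ≤ 0 := by
            rw [← Real.cos_neg]
            exact Real.cos_nonpos_of_pi_div_two_le_of_le (by linarith) (by linarith [hθ.1, Real.pi_pos])
          linarith
        · exact absurd (Real.cos_nonpos_of_pi_div_two_le_of_le hc (by linarith [hθ.2, Real.pi_pos])) (by linarith)
      constructor
      · by_contra hc
        push_neg at hc
        have : Real.cos (θ - α) ≤ 0 := by
          rw [← Real.cos_neg]
          exact Real.cos_nonpos_of_pi_div_two_le_of_le (by linarith) (by linarith [hθ2.1, Real.pi_pos])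
        linarith
      · exact hθ2.2
    · rintro ⟨h1, h2⟩
      have hc1 : 0 < Real.cos θ := Real.cos_pos_of_mem_Ioo ⟨by linarith, h2⟩
      refine ⟨hc1, Real.cos_pos_of_mem_Ioo ⟨by linarith, by linarith⟩⟩
  -- measure via polar coordinates
  have hmeas : MeasurableSet (wedge2 α) := (wedge2_isOpen α).measurableSet
  have hfin : volume (wedge2 α) < ⊤ := by
    refine lt_of_le_of_lt (measure_mono ?_) (measure_ball_lt_top (x := (0:ℝ×ℝ)) (r := 2))
    rintro ⟨x, y⟩ ⟨h1, h2, h3⟩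
    have hx : |x| < 2 := by nlinarith [sq_nonneg x, sq_nonneg y, abs_nonneg x, sq_abs x]
    have hy : |y| < 2 := by nlinarith [sq_nonneg x, sq_nonneg y, abs_nonneg y, sq_abs y]
    rw [mem_ball_zero_iff, Prod.norm_def]
    exact max_lt (by simpa using hx) (by simpa using hy)
  have hind : ∫ p : ℝ × ℝ, (wedge2 α).indicator (1 : ℝ × ℝ → ℝ) p = (π - α) / 2 := by
    rw [← integral_comp_polarCoord_symm]
    have congr1 : ∀ p ∈ polarCoord.target,
        p.1 • (wedge2 α).indicator (1 : ℝ × ℝ → ℝ) (polarCoord.symm p)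
        = ((Set.Ioo (0:ℝ) 1).indicator (fun s => s) p.1) *
          ((Set.Ioo (α - π/2) (π/2)).indicator (fun _ => (1:ℝ)) p.2) := by
      rintro ⟨s, θ⟩ ⟨hs, hθ⟩
      simp only [Set.mem_Ioi] at hs
      have hmem : polarCoord.symm (s, θ) ∈ wedge2 α ↔ (s < 1 ∧ θ ∈ Set.Ioo (α - π/2) (π/2)) := by
        rw [← key θ hθ]
        simp only [wedge2, polarCoord_symm_apply, Set.mem_setOf_eq]
        have e1 : (s * Real.cos θ) ^ 2 + (s * Real.sin θ) ^ 2 = s ^ 2 := by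
          have := Real.sin_sq_add_cos_sq θ; nlinarith
        have e2 : Real.cos α * (s * Real.cos θ) + Real.sin α * (s * Real.sin θ)
            = s * Real.cos (θ - α) := by
          rw [Real.cos_sub]; ring
        rw [e1, e2]
        constructor
        · rintro ⟨h1, h2, h3⟩
          refine ⟨?_, ?_, ?_⟩
          · nlinarith
          · rcases mul_pos_iff.mp h2 with h | h
            · exact h.2
            · linarith [h.1]
          · rcases mul_pos_iff.mp h3 with h | h
            · exact h.2
            · linarith [h.1]
        · rintro ⟨h1, h2, h3⟩
          exact ⟨by nlinarith, by positivity, by positivity⟩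
      by_cases hin : polarCoord.symm (s, θ) ∈ wedge2 α
      · obtain ⟨hs1, hθ1⟩ := hmem.mp hin
        rw [Set.indicator_of_mem hin, Set.indicator_of_mem (Set.mem_Ioo.mpr ⟨hs, hs1⟩),
          Set.indicator_of_mem hθ1]
        simp
      · rw [Set.indicator_of_notMem hin]
        have : ¬(s < 1 ∧ θ ∈ Set.Ioo (α - π/2) (π/2)) := fun h => hin (hmem.mpr h)
        rcases not_and_or.mp this with h | h
        · rw [Set.indicator_of_notMem (fun hc => h (Set.mem_Ioo.mp hc).2)]
          simp
        · rw [Set.indicator_of_notMem h]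
          simp
    rw [setIntegral_congr_fun polarCoord.open_target.measurableSet congr1]
    rw [polarCoord_target, Measure.volume_eq_prod, setIntegral_prod_mul]
    rw [setIntegral_indicator measurableSet_Ioo, setIntegral_indicator measurableSet_Ioo]
    have h1 : Set.Ioi (0:ℝ) ∩ Set.Ioo 0 1 = Set.Ioo 0 1 := by
      rw [Set.inter_eq_right]; exact fun x hx => hx.1
    have h2 : Set.Ioo (-π) π ∩ Set.Ioo (α - π/2) (π/2) = Set.Ioo (α - π/2) (π/2) := by
      rw [Set.inter_eq_right]
      intro x hx
      exact ⟨by linarith [hx.1, Real.pi_pos], by linarith [hx.2, Real.pi_pos]⟩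
    rw [h1, h2]
    rw [integral_const, measureReal_restrict_apply_univ, measureReal_def, Real.volume_Ioo]
    have : ∫ x in Set.Ioo (0:ℝ) 1, x = 1/2 := by
      rw [← integral_Ioc_eq_integral_Ioo, ← intervalIntegral.integral_of_le (by norm_num : (0:ℝ) ≤ 1),
        integral_id]
      norm_num
    rw [this, ENNReal.toReal_ofReal (by linarith [Real.pi_pos])]
    simp only [smul_eq_mul]
    ring
  calc volume (wedge2 α) = ENNReal.ofReal ((volume (wedge2 α)).toReal) :=
        (ENNReal.ofReal_toReal hfin.ne).symm
    _ = ENNReal.ofReal ((π - α) / 2) := by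
        rw [← hind, integral_indicator_one hmeas, measureReal_def]

noncomputable def wedge3 (α : ℝ) : Set (ℝ × ℝ × ℝ) :=
  {q : ℝ × ℝ × ℝ | q.1 ^ 2 + q.2.1 ^ 2 + q.2.2 ^ 2 < 1 ∧ 0 < q.2.1 ∧
    0 < Real.cos α * q.2.1 + Real.sin α * q.2.2}

theorem wedge3_isOpen (α : ℝ) : IsOpen (wedge3 α) := by
  have : wedge3 α = {q : ℝ × ℝ × ℝ | q.1 ^ 2 + q.2.1 ^ 2 + q.2.2 ^ 2 < 1} ∩
      ({q : ℝ × ℝ × ℝ | 0 < q.2.1} ∩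
        {q : ℝ × ℝ × ℝ | 0 < Real.cos α * q.2.1 + Real.sin α * q.2.2}) := by
    ext p; simp [wedge3, and_assoc]
  rw [this]
  exact IsOpen.inter (isOpen_lt (by fun_prop) continuous_const)
    (IsOpen.inter (isOpen_lt continuous_const (by fun_prop))
      (isOpen_lt continuous_const (by fun_prop)))

theorem wedge3_volume {α : ℝ} (h0 : 0 ≤ α) (hπ : α ≤ π) :
    volume (wedge3 α) = ENNReal.ofReal (2 * (π - α) / 3) := by
  have hslice : ∀ z : ℝ, volume (Prod.mk z ⁻¹' wedge3 α)
      = ENNReal.ofReal (1 - z ^ 2) * volume (wedge2 α) := by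
    intro z
    rcases le_or_gt (1 - z ^ 2) 0 with hz | hz
    · have : Prod.mk z ⁻¹' wedge3 α = ∅ := by
        ext ⟨x, y⟩
        simp only [Set.mem_preimage, wedge3, Set.mem_setOf_eq, Set.mem_empty_iff_false,
          iff_false, not_and_or, not_lt]
        left
        nlinarith [sq_nonneg x, sq_nonneg y]
      rw [this, ENNReal.ofReal_of_nonpos hz]
      simp
    · set r := Real.sqrt (1 - z ^ 2) with hr
      have hrpos : 0 < r := Real.sqrt_pos.mpr hz
      have hr2 : r ^ 2 = 1 - z ^ 2 := Real.sq_sqrt hz.le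
      have hset : Prod.mk z ⁻¹' wedge3 α = r • wedge2 α := by
        ext ⟨x, y⟩
        rw [Set.mem_smul_set_iff_inv_smul_mem₀ hrpos.ne']
        simp only [Set.mem_preimage, wedge3, wedge2, Set.mem_setOf_eq, Prod.smul_mk,
          smul_eq_mul]
        constructor
        · rintro ⟨h1, h2, h3⟩
          refine ⟨?_, by positivity, ?_⟩
          · have step : (r⁻¹) ^ 2 * (x ^ 2 + y ^ 2) < (r⁻¹)^2 * (1 - z^2) :=
              mul_lt_mul_of_pos_left (by linarith) (by positivity)
            calc (r⁻¹ * x) ^ 2 + (r⁻¹ * y) ^ 2 = (r⁻¹) ^ 2 * (x ^ 2 + y ^ 2) := by ring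
              _ < (r⁻¹)^2 * (1 - z^2) := step
              _ = 1 := by rw [← hr2]; field_simp
          · have : 0 < r⁻¹ * (Real.cos α * x + Real.sin α * y) := by positivity
            calc (0:ℝ) < r⁻¹ * (Real.cos α * x + Real.sin α * y) := this
              _ = Real.cos α * (r⁻¹ * x) + Real.sin α * (r⁻¹ * y) := by ring
        · rintro ⟨h1, h2, h3⟩
          have hx : 0 < x := by
            have := mul_pos hrpos h2
            calc (0:ℝ) < r * (r⁻¹ * x) := mul_pos hrpos h2
              _ = x := by field_simp
          refine ⟨?_, hx, ?_⟩
          · have := mul_lt_mul_of_pos_left h1 (by positivity : (0:ℝ) < r ^ 2)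
            rw [mul_one] at this
            calc z ^ 2 + x ^ 2 + y ^ 2
                = z ^ 2 + r ^ 2 * ((r⁻¹ * x) ^ 2 + (r⁻¹ * y) ^ 2) := by
                  field_simp; ring
              _ < z ^ 2 + (1 - z ^ 2) := by rw [← hr2]; linarith
              _ = 1 := by ring
          · have := mul_pos hrpos h3
            calc (0:ℝ) < r * (Real.cos α * (r⁻¹ * x) + Real.sin α * (r⁻¹ * y)) := this
              _ = Real.cos α * x + Real.sin α * y := by field_simp
      rw [hset, Measure.addHaar_smul_of_nonneg volume hrpos.le, ← hr2]
      congr 1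
      norm_num
  have hzint : ∫⁻ z : ℝ, ENNReal.ofReal (1 - z ^ 2) = ENNReal.ofReal (4 / 3) := by
    have heq : (fun z : ℝ => ENNReal.ofReal (1 - z ^ 2))
        = (Set.Ioo (-1 : ℝ) 1).indicator (fun z => ENNReal.ofReal (1 - z ^ 2)) := by
      ext z
      by_cases hmem : z ∈ Set.Ioo (-1 : ℝ) 1
      · rw [Set.indicator_of_mem hmem]
      · rw [Set.indicator_of_notMem hmem, ENNReal.ofReal_of_nonpos]
        simp only [Set.mem_Ioo, not_and_or, not_lt] at hmem
        rcases hmem with h | h <;> nlinarith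
    rw [heq, lintegral_indicator measurableSet_Ioo,
      ← ofReal_integral_eq_lintegral_ofReal]
    · congr 1
      rw [← integral_Ioc_eq_integral_Ioo,
        ← intervalIntegral.integral_of_le (by norm_num : (-1:ℝ) ≤ 1)]
      rw [intervalIntegral.integral_sub intervalIntegrable_const ((continuous_pow 2).intervalIntegrable _ _),
        intervalIntegral.integral_const, integral_pow]
      norm_num
    · exact ((continuous_const.sub (continuous_pow 2)).integrableOn_Icc).mono_set
        Set.Ioo_subset_Icc_self
    · filter_upwards [ae_restrict_mem measurableSet_Ioo] with z hz
      simp only [Pi.zero_apply]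
      nlinarith [hz.1, hz.2]
  rw [Measure.volume_eq_prod, Measure.prod_apply (wedge3_isOpen α).measurableSet]
  simp_rw [hslice]
  rw [lintegral_mul_const _ (by measurability), hzint, wedge2_volume h0 hπ,
    ← ENNReal.ofReal_mul (by norm_num)]
  congr 1
  ring

theorem cone_volume (u w : E3) (hu : ‖u‖ = 1) (hw : ‖w‖ = 1) :
    volume {x : E3 | ‖x‖ < 1 ∧ 0 < ⟪x, u⟫ ∧ 0 < ⟪x, w⟫}
      = ENNReal.ofReal (2 * (π - InnerProductGeometry.angle u w) / 3) := by
  set α := InnerProductGeometry.angle u w with hα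
  obtain ⟨b, hb0, hbw⟩ := basis_exists u w hu hw
  -- step 1 : transfer via b.repr
  have hS : {x : E3 | ‖x‖ < 1 ∧ 0 < ⟪x, u⟫ ∧ 0 < ⟪x, w⟫}
      = b.repr ⁻¹' {y : E3 | ‖y‖ < 1 ∧ 0 < y 0 ∧ 0 < Real.cos α * y 0 + Real.sin α * y 1} := by
    ext x
    have h0 : b.repr x 0 = ⟪x, u⟫ := by
      rw [b.repr_apply_apply, hb0, real_inner_comm]
    have h1 : ⟪x, w⟫ = Real.cos α * b.repr x 0 + Real.sin α * b.repr x 1 := by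
      rw [hbw, inner_add_right, real_inner_smul_right, real_inner_smul_right,
        b.repr_apply_apply, b.repr_apply_apply, real_inner_comm x (b 0),
        real_inner_comm x (b 1)]
    simp only [Set.mem_preimage, Set.mem_setOf_eq, b.repr.norm_map, h0, h1]
  have hco : ∀ i : Fin 3, Continuous fun y : E3 => y i := fun i =>
    (EuclideanSpace.proj (𝕜 := ℝ) (i : Fin 3)).continuous
  have hopen : IsOpen {y : E3 | ‖y‖ < 1 ∧ 0 < y 0 ∧ 0 < Real.cos α * y 0 + Real.sin α * y 1} := by
    have : {y : E3 | ‖y‖ < 1 ∧ 0 < y 0 ∧ 0 < Real.cos α * y 0 + Real.sin α * y 1}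
        = {y : E3 | ‖y‖ < 1} ∩ ({y : E3 | 0 < y 0} ∩
          {y : E3 | 0 < Real.cos α * y 0 + Real.sin α * y 1}) := by
      ext y; simp [and_assoc]
    rw [this]
    exact (isOpen_lt continuous_norm continuous_const).inter
      ((isOpen_lt continuous_const (hco 0)).inter (isOpen_lt continuous_const
        (continuous_const.mul (hco 0) |>.add (continuous_const.mul (hco 1)))))
  rw [hS, (b.measurePreserving_repr).measure_preimage hopen.measurableSet.nullMeasurableSet]
  rw [← ((EuclideanSpace.volume_preserving_symm_measurableEquiv_toLp (Fin 3)).symm _).measure_preimage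
    hopen.measurableSet.nullMeasurableSet]
  have hcomp := ((MeasurePreserving.id (volume : Measure ℝ)).prod
      (volume_preserving_finTwoArrow ℝ)).comp
      (volume_preserving_piFinSuccAbove (fun _ : Fin 3 => ℝ) 2)
  have hTT : (MeasurableEquiv.toLp 2 (Fin 3 → ℝ)).symm.symm ⁻¹'
        {y : E3 | ‖y‖ < 1 ∧ 0 < y 0 ∧ 0 < Real.cos α * y 0 + Real.sin α * y 1}
      = (Prod.map id MeasurableEquiv.finTwoArrow ∘
          MeasurableEquiv.piFinSuccAbove (fun _ : Fin 3 => ℝ) 2) ⁻¹' wedge3 α := by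
    ext f
    have happ : ∀ i : Fin 3, ((MeasurableEquiv.toLp 2 (Fin 3 → ℝ)).symm.symm f) i = f i :=
      fun i => rfl
    have hnorm : ‖(MeasurableEquiv.toLp 2 (Fin 3 → ℝ)).symm.symm f‖ < 1
        ↔ f 0 ^ 2 + f 1 ^ 2 + f 2 ^ 2 < 1 := by
      rw [EuclideanSpace.norm_eq]
      rw [show ∑ i, ‖((MeasurableEquiv.toLp 2 (Fin 3 → ℝ)).symm.symm f) i‖ ^ 2
          = f 0 ^ 2 + f 1 ^ 2 + f 2 ^ 2 by
        simp [Fin.sum_univ_three, happ, sq_abs]]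
      rw [Real.sqrt_lt' one_pos, one_pow]
    simp only [Set.mem_preimage, Set.mem_setOf_eq, Function.comp_apply, hnorm, happ, wedge3,
      MeasurableEquiv.piFinSuccAbove_apply, Prod.map_apply, id_eq,
      MeasurableEquiv.finTwoArrow_apply]
    have hsa0 : (2 : Fin 3).succAbove 0 = 0 := by decide
    have hsa1 : (2 : Fin 3).succAbove 1 = 1 := by decide
    simp only [Fin.insertNthEquiv_symm_apply, Fin.removeNth, Prod.map_apply, id_eq]
    rw [hsa0, hsa1]
    constructor
    · rintro ⟨h1, h2, h3⟩
      exact ⟨by linarith, h2, h3⟩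
    · rintro ⟨h1, h2, h3⟩
      exact ⟨by linarith, h2, h3⟩
  rw [hTT, hcomp.measure_preimage (wedge3_isOpen α).measurableSet.nullMeasurableSet]
  rw [← Measure.volume_eq_prod]
  exact wedge3_volume (InnerProductGeometry.angle_nonneg u w) (InnerProductGeometry.angle_le_pi u w)

theorem lune_measurable (u w : E3) :
    MeasurableSet {v : sphere (0 : E3) 1 | 0 < ⟪(v : E3), u⟫ ∧ 0 < ⟪(v : E3), w⟫} := by
  have hc : Continuous fun v : sphere (0 : E3) 1 => (v : E3) := continuous_subtype_val
  exact ((isOpen_lt continuous_const ((continuous_inner (𝕜 := ℝ)).comp (hc.prodMk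
      continuous_const))).inter (isOpen_lt continuous_const ((continuous_inner (𝕜 := ℝ)).comp
      (hc.prodMk continuous_const)))).measurableSet

theorem lune_measure (u w : E3) (hu : ‖u‖ = 1) (hw : ‖w‖ = 1) :
    (volume : Measure E3).toSphere {v : sphere (0 : E3) 1 | 0 < ⟪(v : E3), u⟫ ∧ 0 < ⟪(v : E3), w⟫}
      = ENNReal.ofReal (2 * (π - InnerProductGeometry.angle u w)) := by
  rw [(volume : Measure E3).toSphere_apply' (lune_measurable u w)]
  have hset : Set.Ioo (0:ℝ) 1 • (((↑) : sphere (0 : E3) 1 → E3) ''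
        {v : sphere (0 : E3) 1 | 0 < ⟪(v : E3), u⟫ ∧ 0 < ⟪(v : E3), w⟫})
      = {x : E3 | ‖x‖ < 1 ∧ 0 < ⟪x, u⟫ ∧ 0 < ⟪x, w⟫} := by
    ext x
    constructor
    · rintro ⟨r, hr, y, ⟨v, ⟨hv1, hv2⟩, rfl⟩, rfl⟩
      have hvn : ‖(v : E3)‖ = 1 := mem_sphere_zero_iff_norm.mp v.2
      refine ⟨?_, ?_, ?_⟩
      · rw [norm_smul, hvn, Real.norm_eq_abs, abs_of_pos hr.1]; simpa using hr.2
      · rw [real_inner_smul_left]; exact mul_pos hr.1 hv1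
      · rw [real_inner_smul_left]; exact mul_pos hr.1 hv2
    · rintro ⟨h1, h2, h3⟩
      have hx0 : x ≠ 0 := by
        rintro rfl; simp at h2
      have hnx : 0 < ‖x‖ := norm_pos_iff.mpr hx0
      have hv : ‖x‖⁻¹ • x ∈ sphere (0 : E3) 1 := by
        rw [mem_sphere_zero_iff_norm, norm_smul, Real.norm_eq_abs, abs_inv, abs_of_pos hnx,
          inv_mul_cancel₀ hnx.ne']
      refine ⟨‖x‖, ⟨hnx, h1⟩, ‖x‖⁻¹ • x, ⟨⟨‖x‖⁻¹ • x, hv⟩, ⟨?_, ?_⟩, rfl⟩, ?_⟩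
      · rw [real_inner_smul_left]; positivity
      · rw [real_inner_smul_left]; positivity
      · exact smul_inv_smul₀ hnx.ne' x
  rw [hset, cone_volume u w hu hw]
  rw [show ((finrank ℝ E3 : ℝ≥0∞)) = ENNReal.ofReal 3 by
      rw [finrank_euclideanSpace]
      simp]
  rw [← ENNReal.ofReal_mul (by norm_num)]
  congr 1
  ring

/-- the uniform (normalized surface area) probability measure on the unit sphere in ℝ³ -/
noncomputable def sphereUniform :
    Measure (sphere (0 : EuclideanSpace ℝ (Fin 3)) 1) :=
  ((volume : Measure (EuclideanSpace ℝ (Fin 3))).toSphere Set.univ)⁻¹ •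
    (volume : Measure (EuclideanSpace ℝ (Fin 3))).toSphere

theorem stmt_11 (u w : EuclideanSpace ℝ (Fin 3)) (hu : ‖u‖ = 1) (hw : ‖w‖ = 1) :
    (sphereUniform[|{v | 0 < ⟪(v : EuclideanSpace ℝ (Fin 3)), w⟫}])
        {v | 0 < ⟪(v : EuclideanSpace ℝ (Fin 3)), u⟫} =
      ENNReal.ofReal (1 - InnerProductGeometry.angle u w / Real.pi) := by
  set α := InnerProductGeometry.angle u w with hα
  set ν := (volume : Measure E3).toSphere with hν
  have hw0 : w ≠ 0 := fun h => by simp [h] at hw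
  have hBmeas : MeasurableSet {v : sphere (0 : E3) 1 | 0 < ⟪(v : E3), w⟫} := by
    simpa using lune_measurable w w
  have hνB : ν {v : sphere (0 : E3) 1 | 0 < ⟪(v : E3), w⟫} = ENNReal.ofReal (2 * π) := by
    have := lune_measure w w hw hw
    rw [InnerProductGeometry.angle_self hw0, sub_zero] at this
    simpa using this
  have hBA : {v : sphere (0 : E3) 1 | 0 < ⟪(v : E3), w⟫} ∩ {v | 0 < ⟪(v : E3), u⟫}
      = {v : sphere (0 : E3) 1 | 0 < ⟪(v : E3), u⟫ ∧ 0 < ⟪(v : E3), w⟫} := by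
    ext v; simp [and_comm]
  have ha0 : ν Set.univ ≠ 0 := by
    rw [hν, Measure.toSphere_apply_univ]
    exact mul_ne_zero (by simp [finrank_euclideanSpace]) (measure_ball_pos _ _ one_pos).ne'
  have hatop : ν Set.univ ≠ ⊤ := measure_ne_top _ _
  rw [cond_apply hBmeas]
  have happ : ∀ s : Set (sphere (0 : E3) 1), sphereUniform s = (ν Set.univ)⁻¹ * ν s := by
    intro s
    rw [sphereUniform, Measure.smul_apply, smul_eq_mul, hν]
  rw [happ, happ, hBA, lune_measure u w hu hw, hνB, ← hα]
  rw [ENNReal.mul_inv (Or.inl (ENNReal.inv_ne_zero.mpr hatop))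
    (Or.inl (ENNReal.inv_ne_top.mpr ha0)), inv_inv]
  calc ν Set.univ * (ENNReal.ofReal (2 * π))⁻¹ *
        ((ν Set.univ)⁻¹ * ENNReal.ofReal (2 * (π - α)))
      = (ν Set.univ * (ν Set.univ)⁻¹) *
        ((ENNReal.ofReal (2 * π))⁻¹ * ENNReal.ofReal (2 * (π - α))) := by ring
    _ = (ENNReal.ofReal (2 * π))⁻¹ * ENNReal.ofReal (2 * (π - α)) := by
        rw [ENNReal.mul_inv_cancel ha0 hatop, one_mul]
    _ = ENNReal.ofReal (2 * (π - α)) / ENNReal.ofReal (2 * π) := by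
        rw [div_eq_mul_inv, mul_comm]
    _ = ENNReal.ofReal (2 * (π - α) / (2 * π)) := by
        rw [ENNReal.ofReal_div_of_pos (by positivity)]
    _ = ENNReal.ofReal (1 - α / π) := by
        congr 1
        field_simp
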